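/- For the free motion of a particle in ℝⁿ interrupted by reflections off a hypersurface that is a cone with vertex at the origin, the quantity I = Σ_{i<j} (xⁱvʲ − xʲvⁱ)² is preserved under billiard reflection at any boundary point. -/

import Mathlib

open Finset

lemma lagrange_identity (n : ℕ) (a b : Fin n → ℝ) :
    ∑ i : Fin n, ∑ j ∈ Finset.Ioi i, (a i * b j - a j * b i) ^ 2 =
      (∑ i, a i ^ 2) * (∑ i, b i ^ 2) - (∑ i, a i * b i) ^ 2 := by
  have key := Finset.sum_sum_Ioi_add_eq_sum_sum_off_diag
    (fun i j => (a i * b j - a j * b i) ^ 2)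
  have h2 : ∑ i : Fin n, ∑ j ∈ Finset.Ioi i,
      ((a j * b i - a i * b j) ^ 2 + (a i * b j - a j * b i) ^ 2) =
      2 * ∑ i : Fin n, ∑ j ∈ Finset.Ioi i, (a i * b j - a j * b i) ^ 2 := by
    rw [Finset.mul_sum]
    refine Finset.sum_congr rfl fun i _ => ?_
    rw [Finset.mul_sum]
    exact Finset.sum_congr rfl fun j _ => by ring
  rw [h2] at key
  have hfull : ∑ i : Fin n, ∑ j : Fin n, (a j * b i - a i * b j) ^ 2 =
      2 * ((∑ i, a i ^ 2) * (∑ i, b i ^ 2) - (∑ i, a i * b i) ^ 2) := by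
    have h1 : ∀ i j : Fin n, (a j * b i - a i * b j) ^ 2 =
        a j ^ 2 * b i ^ 2 + a i ^ 2 * b j ^ 2 - 2 * ((a i * b i) * (a j * b j)) := by
      intros; ring
    simp_rw [h1, Finset.sum_sub_distrib, Finset.sum_add_distrib, ← Finset.sum_mul,
      ← Finset.mul_sum, ← Finset.sum_mul]
    ring
  have hoff : (2 : ℝ) * ∑ i : Fin n, ∑ j ∈ Finset.Ioi i, (a i * b j - a j * b i) ^ 2 =
      ∑ i : Fin n, ∑ j : Fin n, (a j * b i - a i * b j) ^ 2 := by
    rw [key]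
    refine Finset.sum_congr rfl fun i _ => ?_
    rw [← Finset.sum_compl_add_sum {i}]
    simp
  rw [hfull] at hoff
  linarith

/-- The squared angular-momentum bivector `I = Σ_{i<j} (xⁱvʲ − xʲvⁱ)²` is
preserved by the billiard reflection `v ↦ v − 2⟨v, ν⟩ν` at a boundary point
`p` of a cone with vertex at the origin (where the unit normal `ν` satisfies
`⟨p, ν⟩ = 0`). -/
theorem cone_billiard_angular_momentum_invariant
    (n : ℕ) (p v ν : EuclideanSpace ℝ (Fin n))
    (hν : ‖ν‖ = 1) (hpν : (inner ℝ p ν : ℝ) = 0)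
    (v' : EuclideanSpace ℝ (Fin n))
    (hv' : v' = v - (2 * (inner ℝ v ν : ℝ)) • ν) :
    ∑ i : Fin n, ∑ j ∈ Finset.Ioi i, (p i * v' j - p j * v' i) ^ 2 =
      ∑ i : Fin n, ∑ j ∈ Finset.Ioi i, (p i * v j - p j * v i) ^ 2 := by
  have hnu2 : ∑ i, (ν i : ℝ) ^ 2 = 1 := by
    have h : (inner ℝ ν ν : ℝ) = 1 := by
      rw [real_inner_self_eq_norm_sq, hν]; norm_num
    rw [PiLp.inner_apply] at h; simpa [RCLike.inner_apply, sq] using h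
  have hpn : ∑ i, p i * ν i = 0 := by
    rw [← hpν]; simp [PiLp.inner_apply, RCLike.inner_apply, mul_comm]
  have hvn : (inner ℝ v ν : ℝ) = ∑ i, v i * ν i := by
    simp [PiLp.inner_apply, RCLike.inner_apply, mul_comm]
  set c : ℝ := inner ℝ v ν with hc
  have hv'i : ∀ i, v' i = v i - 2 * c * ν i := by
    intro i; rw [hv']; simp [PiLp.sub_apply]
  rw [lagrange_identity n p v', lagrange_identity n p v]
  have e1 : ∑ i, v' i ^ 2 = ∑ i, v i ^ 2 := by
    simp_rw [hv'i]
    have expand : ∀ i, (v i - 2 * c * ν i) ^ 2 =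
        v i ^ 2 - 4 * c * (v i * ν i) + 4 * c ^ 2 * ν i ^ 2 := by intros; ring
    simp_rw [expand, Finset.sum_add_distrib, Finset.sum_sub_distrib, ← Finset.mul_sum,
      ← hvn, hnu2]
    ring
  have e2 : ∑ i, p i * v' i = ∑ i, p i * v i := by
    simp_rw [hv'i]
    have expand : ∀ i, p i * (v i - 2 * c * ν i) =
        p i * v i - 2 * c * (p i * ν i) := by intros; ring
    simp_rw [expand, Finset.sum_sub_distrib, ← Finset.mul_sum, hpn]
    ring
  rw [e1, e2]
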